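/- Let k be a field and let I be an ideal of the polynomial ring k[t_1,...,t_n] such that the quotient ring k[t_1,...,t_n]/I is a finite-dimensional k-vector space. Then there exists a finite order ideal β of exponent vectors such that the images in k[t_1,...,t_n]/I of the monomials t^s with s ∈ β form a k-vector space basis of the quotient ring. -/

import Mathlib

open MvPolynomial Submodule Set

set_option maxHeartbeats 1000000 in
/-- For a field `k` and an ideal `I` of `k[t_1,...,t_n]` with
finite-dimensional quotient, there is a finite order ideal `β` of exponent
vectors whose monomials map to a `k`-basis of the quotient. -/
theorem stmt0 {k : Type*} [Field k] {n : ℕ} (I : Ideal (MvPolynomial (Fin n) k))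
    (hfd : FiniteDimensional k (MvPolynomial (Fin n) k ⧸ I)) :
    ∃ β : Finset (Fin n →₀ ℕ),
      (∀ s ∈ β, ∀ t : Fin n →₀ ℕ, t ≤ s → t ∈ β) ∧
      LinearIndependent k (fun s : β =>
        Ideal.Quotient.mk I (MvPolynomial.monomial s.1 (1 : k))) ∧
      Submodule.span k (Set.range (fun s : β =>
        Ideal.Quotient.mk I (MvPolynomial.monomial s.1 (1 : k)))) = ⊤ := by
  classical
  set Q := MvPolynomial (Fin n) k ⧸ I
  let m : MonomialOrder (Fin n) := MonomialOrder.lex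
  set v : (Fin n →₀ ℕ) → Q := fun s => Ideal.Quotient.mk I (monomial s (1 : k)) with hv_def
  set S : Set (Fin n →₀ ℕ) :=
    {s | v s ∉ span k (v '' {t | m.toSyn t < m.toSyn s})} with hS_def
  -- linear independence on S
  have hli : LinearIndependent k (fun s : S => v s.1) := by
    rw [linearIndependent_iff']
    intro t g hsum i hi
    by_contra hg
    set t' : Finset S := t.filter (fun j => g j ≠ 0) with ht'
    have hne : t'.Nonempty := ⟨i, Finset.mem_filter.2 ⟨hi, hg⟩⟩
    obtain ⟨i₀, hi₀t, hmax⟩ := t'.exists_max_image (fun j => m.toSyn j.1) hne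
    have hsum' : ∑ j ∈ t', g j • v j.1 = 0 := by
      rw [← hsum]
      apply Finset.sum_filter_of_ne
      intro x hx hxne
      intro h0
      exact hxne (by rw [h0, zero_smul])
    have hgi₀ : g i₀ ≠ 0 := (Finset.mem_filter.1 hi₀t).2
    have hrw : g i₀ • v i₀.1 = -∑ j ∈ t'.erase i₀, g j • v j.1 := by
      have := Finset.add_sum_erase t' (fun j => g j • v j.1) hi₀t
      rw [hsum'] at this
      linear_combination (norm := module) this
    have hmem : v i₀.1 ∈ span k (v '' {u | m.toSyn u < m.toSyn i₀.1}) := by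
      have : v i₀.1 = (g i₀)⁻¹ • (g i₀ • v i₀.1) := by
        rw [smul_smul, inv_mul_cancel₀ hgi₀, one_smul]
      rw [this, hrw]
      refine smul_mem _ _ (neg_mem (Submodule.sum_mem _ ?_))
      intro j hj
      refine smul_mem _ _ (subset_span ?_)
      refine ⟨j.1, ?_, rfl⟩
      have hjne : j ≠ i₀ := Finset.ne_of_mem_erase hj
      have hle := hmax j (Finset.mem_of_mem_erase hj)
      have : j.1 ≠ i₀.1 := fun h => hjne (Subtype.ext h)
      exact lt_of_le_of_ne hle (fun h => this (m.toSyn.injective h))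
    exact i₀.2 hmem
  -- S is finite
  have hSfin : S.Finite := Set.finite_coe_iff.mp hli.finite
  -- every v s in span of v '' S
  have key : ∀ s, v s ∈ span k (v '' S) := by
    have : ∀ a : m.syn, v (m.toSyn.symm a) ∈ span k (v '' S) := by
      intro a
      induction a using WellFoundedLT.induction with
      | ind x ih =>
        by_cases hx : m.toSyn.symm x ∈ S
        · exact subset_span (mem_image_of_mem _ hx)
        · have hx' : v (m.toSyn.symm x) ∈
              span k (v '' {t | m.toSyn t < m.toSyn (m.toSyn.symm x)}) := not_not.mp hx
          refine Submodule.span_le.2 ?_ hx'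
          rintro _ ⟨u, hu, rfl⟩
          simp only [mem_setOf_eq, AddEquiv.apply_symm_apply] at hu
          have := ih (m.toSyn u) hu
          simpa using this
    intro s
    simpa using this (m.toSyn s)
  -- span
  have hspan : span k (v '' S) = ⊤ := by
    rw [eq_top_iff]
    have hv : span k (Set.range v) = ⊤ := by
      have hb := (MvPolynomial.basisMonomials (Fin n) k).span_eq
      let f : MvPolynomial (Fin n) k →ₗ[k] Q := (Ideal.Quotient.mkₐ k I).toLinearMap
      have hrange : Set.range v = f '' Set.range (basisMonomials (Fin n) k) := by
        rw [← Set.range_comp]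
        refine congrArg Set.range (funext fun s => ?_)
        simp [v, f, coe_basisMonomials]
      rw [hrange, ← Submodule.map_span, hb, Submodule.map_top, LinearMap.range_eq_top]
      exact fun q => by
        obtain ⟨p, hp⟩ := Ideal.Quotient.mk_surjective q
        exact ⟨p, hp⟩
    rw [← hv, Submodule.span_le]
    rintro _ ⟨s, rfl⟩
    exact key s
  -- downward closed
  have hdc : ∀ s ∈ S, ∀ t, t ≤ s → t ∈ S := by
    intro s hs t hts
    by_contra ht
    have ht' : v t ∈ span k (v '' {u | m.toSyn u < m.toSyn t}) := not_not.mp ht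
    set u := s - t with hu
    have hsum : t + u = s := add_tsub_cancel_of_le hts
    let μ : Q →ₗ[k] Q := LinearMap.mulLeft k (v u)
    have hmul : ∀ w, μ (v w) = v (w + u) := by
      intro w
      simp only [μ, LinearMap.mulLeft_apply, v]
      rw [← map_mul, monomial_mul, one_mul, add_comm]
    apply hs
    have : v s = μ (v t) := by rw [hmul, hsum]
    rw [this]
    have h1 : μ (v t) ∈ Submodule.map μ (span k (v '' {w | m.toSyn w < m.toSyn t})) :=
      Submodule.mem_map_of_mem ht'
    rw [Submodule.map_span, ← Set.image_comp] at h1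
    refine Submodule.span_mono ?_ h1
    rintro _ ⟨w, hw, rfl⟩
    refine ⟨w + u, ?_, (hmul w).symm⟩
    simp only [mem_setOf_eq, map_add] at hw ⊢
    rw [← hsum, map_add]
    exact add_lt_add_of_lt_of_le hw le_rfl
  refine ⟨hSfin.toFinset, ?_, ?_, ?_⟩
  · intro s hs t hts
    rw [Set.Finite.mem_toFinset] at hs ⊢
    exact hdc s hs t hts
  · exact (linearIndependent_equiv
      (Equiv.subtypeEquivRight (fun x => hSfin.mem_toFinset))).2 hli
  · rw [eq_top_iff, ← hspan, Submodule.span_le]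
    rintro _ ⟨s, hs, rfl⟩
    refine subset_span ⟨⟨s, hSfin.mem_toFinset.mpr hs⟩, rfl⟩
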